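/- Let g ∈ L²(ℝ) be a window function and s > 0, and suppose the system of translates {T_{sk}(Rg) : k ∈ ℤ} is a Bessel sequence in L²(ℝ). Let c ∈ ℓ²(ℤ). Then the series f = Σ_{k∈ℤ} c_k T_{sk}(Rg) and f_× = Σ_{k∈ℤ} conj(c_k) T_{sk}(Rg) converge unconditionally in L²(ℝ), and |V_g f(x, n/s)| = |V_g f_×(x, n/s)| for every x ∈ ℝ and every n ∈ ℤ. -/

import Mathlib

open MeasureTheory Complex Real

/-- The short-time Fourier transform of `f ∈ L²(ℝ)` with respect to the window `g ∈ L²(ℝ)`: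
`V_g f (x, ω) = ∫ f(t) conj(g(t-x)) e^{-2πiωt} dt`. -/
noncomputable def STFT (g f : Lp ℂ 2 (volume : Measure ℝ)) (x ω : ℝ) : ℂ :=
  ∫ t : ℝ, f t * (starRingEnd ℂ) (g (t - x)) * Complex.exp (-2 * Real.pi * Complex.I * ω * t)

/-- `f` and `h` agree up to a global phase: `f = ν • h` for some unimodular `ν ∈ ℂ`. -/
def SamePhase (f h : Lp ℂ 2 (volume : Measure ℝ)) : Prop :=
  ∃ ν : ℂ, ‖ν‖ = 1 ∧ f = ν • h

/-- Translation operator `T_τ` on `L²(ℝ)`: `(T_τ f)(t) = f (t - τ)`. -/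
noncomputable def Translate (τ : ℝ) (f : Lp ℂ 2 (volume : Measure ℝ)) :
    Lp ℂ 2 (volume : Measure ℝ) :=
  Lp.compMeasurePreserving (fun t => t - τ) (measurePreserving_sub_right volume τ) f

/-- Reflection operator on `L²(ℝ)`: `(R f)(t) = f (-t)`. -/
noncomputable def Reflect (f : Lp ℂ 2 (volume : Measure ℝ)) : Lp ℂ 2 (volume : Measure ℝ) :=
  Lp.compMeasurePreserving (fun t => -t) (Measure.measurePreserving_neg volume) f

/-- A family `x : ℤ → L²(ℝ)` is a Bessel sequence if `∑ₖ |⟨f, xₖ⟩|² < ∞` for every `f ∈ L²(ℝ)`. -/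
def IsBessel (x : ℤ → Lp ℂ 2 (volume : Measure ℝ)) : Prop :=
  ∀ f : Lp ℂ 2 (volume : Measure ℝ), Summable fun k : ℤ => ‖(inner ℂ f (x k) : ℂ)‖ ^ 2


noncomputable section
open scoped ENNReal

abbrev H2 := Lp ℂ 2 (volume : Measure ℝ)

lemma bessel_memℓp {x : ℤ → H2} (hB : IsBessel x) (f : H2) :
    Memℓp (fun k : ℤ => (inner ℂ (x k) f : ℂ)) 2 := by
  apply memℓp_gen
  have h := hB f
  have : (fun k : ℤ => ‖(inner ℂ (x k) f : ℂ)‖ ^ (2 : ℝ≥0∞).toReal)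
      = fun k : ℤ => ‖(inner ℂ f (x k) : ℂ)‖ ^ 2 := by
    funext k
    rw [← norm_inner_symm]
    norm_num
  rw [this]
  exact h

def besselMap (x : ℤ → H2) (hB : IsBessel x) : H2 →ₗ[ℂ] lp (fun _ : ℤ => ℂ) 2 where
  toFun f := ⟨fun k => (inner ℂ (x k) f : ℂ), bessel_memℓp hB f⟩
  map_add' f g := by
    ext k
    simp [inner_add_right, lp.coeFn_add]
    rfl
  map_smul' a f := by
    ext k
    simp [inner_smul_right, lp.coeFn_smul]

lemma besselMap_cont (x : ℤ → H2) (hB : IsBessel x) : Continuous (besselMap x hB) := by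
  apply LinearMap.continuous_of_seq_closed_graph
  intro u f y hu hy
  ext k
  have h1 : Filter.Tendsto (fun n => (besselMap x hB (u n)) k) Filter.atTop
      (nhds ((inner ℂ (x k) f : ℂ))) := by
    have : Continuous fun z : H2 => (inner ℂ (x k) z : ℂ) := continuous_inner.comp
      (Continuous.prodMk continuous_const continuous_id)
    exact (this.tendsto f).comp hu
  have h2 : Filter.Tendsto (fun n => (besselMap x hB (u n)) k) Filter.atTop (nhds (y k)) := by
    have : Filter.Tendsto (fun n => besselMap x hB (u n)) Filter.atTop (nhds y) := hy
    have hcoord : Continuous fun z : lp (fun _ : ℤ => ℂ) 2 => z k := by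
      apply Metric.continuous_iff.2
      intro z ε hε
      refine ⟨ε, hε, fun w hw => ?_⟩
      calc dist (w k) (z k) ≤ ‖w - z‖ := by
            simpa [dist_eq_norm] using lp.norm_apply_le_norm (by norm_num) (w - z) k
        _ < ε := by simpa [dist_eq_norm] using hw
    exact (hcoord.tendsto y).comp this
  exact tendsto_nhds_unique h2 h1

lemma bessel_finset_bound (x : ℤ → H2) (hB : IsBessel x) :
    ∃ B : ℝ, 0 ≤ B ∧ ∀ (t : Finset ℤ) (f : H2),
      ∑ k ∈ t, ‖(inner ℂ f (x k) : ℂ)‖ ^ 2 ≤ (B * ‖f‖) ^ 2 := by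
  have hcont := besselMap_cont x hB
  set T := besselMap x hB
  let T' : H2 →L[ℂ] lp (fun _ : ℤ => ℂ) 2 := ⟨T, hcont⟩
  have hTB : ∀ f : H2, ‖T f‖ ≤ ‖T'‖ * ‖f‖ := fun f => T'.le_opNorm f
  set B := ‖T'‖ with hBdef
  have hB0 : 0 ≤ B := norm_nonneg _
  refine ⟨B, hB0, fun t f => ?_⟩
  clear_value B
  have h1 : ∑ k ∈ t, ‖(inner ℂ f (x k) : ℂ)‖ ^ 2 ≤ ∑' k : ℤ, ‖(T f) k‖ ^ 2 := by
    have heq : ∀ k : ℤ, ‖(T f) k‖ ^ 2 = ‖(inner ℂ f (x k) : ℂ)‖ ^ 2 := by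
      intro k
      have : (T f) k = (inner ℂ (x k) f : ℂ) := rfl
      rw [this, ← norm_inner_symm]
    calc ∑ k ∈ t, ‖(inner ℂ f (x k) : ℂ)‖ ^ 2 = ∑ k ∈ t, ‖(T f) k‖ ^ 2 := by
          simp_rw [heq]
      _ ≤ ∑' k : ℤ, ‖(T f) k‖ ^ 2 := by
          apply Summable.sum_le_tsum t (fun k _ => by positivity)
          have h := hB f
          have h2 : (fun k : ℤ => ‖(T f) k‖ ^ 2) = fun k : ℤ => ‖(inner ℂ f (x k) : ℂ)‖ ^ 2 :=
            funext heq
          rw [h2]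
          exact h
  have h2 : ∑' k : ℤ, ‖(T f) k‖ ^ 2 = ‖T f‖ ^ 2 := by
    have := lp.norm_rpow_eq_tsum (p := 2) (by norm_num) (T f)
    rw [show ((2:ℝ≥0∞).toReal) = ((2:ℕ):ℝ) by norm_num] at this
    simp only [Real.rpow_natCast] at this
    exact this.symm
  have h3 : ‖T f‖ ^ 2 ≤ (B * ‖f‖) ^ 2 := by
    apply pow_le_pow_left₀ (norm_nonneg _) (hTB f)
  linarith
lemma bessel_partial_norm (x : ℤ → H2) (B : ℝ) (hB0 : 0 ≤ B)
    (hbd : ∀ (t : Finset ℤ) (f : H2), ∑ k ∈ t, ‖(inner ℂ f (x k) : ℂ)‖ ^ 2 ≤ (B * ‖f‖) ^ 2)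
    (c : ℤ → ℂ) (t : Finset ℤ) :
    ‖∑ k ∈ t, c k • x k‖ ≤ B * Real.sqrt (∑ k ∈ t, ‖c k‖ ^ 2) := by
  set h := ∑ k ∈ t, c k • x k with hh
  by_cases h0 : h = 0
  · rw [h0]
    simp only [norm_zero]
    positivity
  have key : ‖h‖ ^ 2 ≤ B * Real.sqrt (∑ k ∈ t, ‖c k‖ ^ 2) * ‖h‖ := by
    have e1 : ((‖h‖ : ℂ)) ^ 2 = inner ℂ h h := (inner_self_eq_norm_sq_to_K h).symm
    have e2 : (inner ℂ h h : ℂ) = ∑ k ∈ t, c k * (inner ℂ h (x k) : ℂ) := by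
      rw [hh]
      rw [inner_sum]
      congr 1
      funext k
      rw [inner_smul_right]
    have e3 : ‖h‖ ^ 2 = ‖(inner ℂ h h : ℂ)‖ := by
      rw [← e1]
      simp
    rw [e3, e2]
    calc ‖∑ k ∈ t, c k * (inner ℂ h (x k) : ℂ)‖
        ≤ ∑ k ∈ t, ‖c k‖ * ‖(inner ℂ h (x k) : ℂ)‖ := by
          refine (norm_sum_le _ _).trans ?_
          apply Finset.sum_le_sum
          intro k _
          rw [norm_mul]
      _ ≤ Real.sqrt (∑ k ∈ t, ‖c k‖ ^ 2) * Real.sqrt (∑ k ∈ t, ‖(inner ℂ h (x k) : ℂ)‖ ^ 2) :=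
          Real.sum_mul_le_sqrt_mul_sqrt t _ _
      _ ≤ Real.sqrt (∑ k ∈ t, ‖c k‖ ^ 2) * (B * ‖h‖) := by
          apply mul_le_mul_of_nonneg_left _ (Real.sqrt_nonneg _)
          have := hbd t h
          calc Real.sqrt (∑ k ∈ t, ‖(inner ℂ h (x k) : ℂ)‖ ^ 2)
              ≤ Real.sqrt ((B * ‖h‖) ^ 2) := Real.sqrt_le_sqrt this
            _ = B * ‖h‖ := Real.sqrt_sq (by positivity)
      _ = B * Real.sqrt (∑ k ∈ t, ‖c k‖ ^ 2) * ‖h‖ := by ring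
  have hpos : 0 < ‖h‖ := norm_pos_iff.2 h0
  nlinarith [key, hpos]

lemma bessel_synthesis (x : ℤ → H2) (hB : IsBessel x) (c : ℤ → ℂ)
    (hc : Summable fun k : ℤ => ‖c k‖ ^ 2) :
    Summable fun k : ℤ => c k • x k := by
  obtain ⟨B, hB0, hbd⟩ := bessel_finset_bound x hB
  rw [summable_iff_vanishing_norm]
  intro ε hε
  have hδ : 0 < (ε / (B + 1)) ^ 2 := by positivity
  obtain ⟨s, hs⟩ := summable_iff_vanishing_norm.1 hc _ hδ
  refine ⟨s, fun t ht => ?_⟩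
  have h1 : ‖∑ k ∈ t, c k • x k‖ ≤ B * Real.sqrt (∑ k ∈ t, ‖c k‖ ^ 2) :=
    bessel_partial_norm x B hB0 hbd c t
  have h2 : ∑ k ∈ t, ‖c k‖ ^ 2 < (ε / (B + 1)) ^ 2 := by
    have := hs t ht
    calc ∑ k ∈ t, ‖c k‖ ^ 2 ≤ ‖∑ k ∈ t, ‖c k‖ ^ 2‖ := le_abs_self _
      _ < (ε / (B + 1)) ^ 2 := this
  have h3 : Real.sqrt (∑ k ∈ t, ‖c k‖ ^ 2) < ε / (B + 1) := by
    rw [show ε / (B + 1) = Real.sqrt ((ε / (B + 1)) ^ 2) from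
      (Real.sqrt_sq (by positivity)).symm]
    exact Real.sqrt_lt_sqrt (by positivity) h2
  calc ‖∑ k ∈ t, c k • x k‖ ≤ B * Real.sqrt (∑ k ∈ t, ‖c k‖ ^ 2) := h1
    _ ≤ (B + 1) * Real.sqrt (∑ k ∈ t, ‖c k‖ ^ 2) := by
        apply mul_le_mul_of_nonneg_right (by linarith) (Real.sqrt_nonneg _)
    _ < (B + 1) * (ε / (B + 1)) := by
        apply mul_lt_mul_of_pos_left h3 (by linarith)
    _ = ε := by field_simp
def stftKerFun (g : H2) (x ω : ℝ) : ℝ → ℂ :=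
  fun t => Complex.exp (2 * Real.pi * Complex.I * ω * t) * (Translate x g : ℝ → ℂ) t

lemma stftKer_memℒp (g : H2) (x ω : ℝ) : MemLp (stftKerFun g x ω) 2 volume := by
  have hg : MemLp ((Translate x g : ℝ → ℂ)) 2 volume := Lp.memLp _
  apply hg.of_le
  · apply AEStronglyMeasurable.mul _ (Lp.aestronglyMeasurable _)
    apply Continuous.aestronglyMeasurable
    continuity
  · filter_upwards with t
    simp only [stftKerFun]
    rw [norm_mul]
    have : ‖Complex.exp (2 * Real.pi * Complex.I * ω * t)‖ = 1 := by
      rw [Complex.norm_exp]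
      have : (2 * Real.pi * Complex.I * ω * t).re = 0 := by
        simp [Complex.mul_re, Complex.mul_im]
      rw [this, Real.exp_zero]
    rw [this, one_mul]

def stftKer (g : H2) (x ω : ℝ) : H2 := (stftKer_memℒp g x ω).toLp _

lemma stft_eq_inner (g f : H2) (x ω : ℝ) :
    STFT g f x ω = (inner ℂ (stftKer g x ω) f : ℂ) := by
  rw [MeasureTheory.L2.inner_def]
  have h1 : (stftKer g x ω : ℝ → ℂ) =ᵐ[volume] stftKerFun g x ω :=
    MemLp.coeFn_toLp _
  have h2 : (Translate x g : ℝ → ℂ) =ᵐ[volume] fun t => g (t - x) :=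
    Lp.coeFn_compMeasurePreserving _ _
  rw [STFT]
  apply integral_congr_ae
  filter_upwards [h1, h2] with t ht1 ht2
  rw [RCLike.inner_apply, ht1, stftKerFun, ht2, map_mul, ← Complex.exp_conj]
  have hc : (starRingEnd ℂ) (2 * Real.pi * Complex.I * ω * t) =
      -2 * Real.pi * Complex.I * ω * t := by
    simp only [map_mul, Complex.conj_I, Complex.conj_ofReal, map_ofNat]
    ring
  rw [hc]
  ring
lemma translate_reflect_coe (g : H2) (τ : ℝ) :
    ((Translate τ (Reflect g)) : ℝ → ℂ) =ᵐ[volume] fun t => g (τ - t) := by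
  have h0 : ((Translate τ (Reflect g)) : ℝ → ℂ)
      =ᵐ[volume] (Reflect g : ℝ → ℂ) ∘ (fun t => t - τ) :=
    Lp.coeFn_compMeasurePreserving _ _
  have h1 : (Reflect g : ℝ → ℂ) =ᵐ[volume] (g : ℝ → ℂ) ∘ (fun t => -t) :=
    Lp.coeFn_compMeasurePreserving _ _
  have h2 : ((Reflect g : ℝ → ℂ) ∘ (fun t : ℝ => t - τ))
      =ᵐ[volume] ((g : ℝ → ℂ) ∘ (fun t : ℝ => -t)) ∘ (fun t : ℝ => t - τ) :=
    (measurePreserving_sub_right volume τ).quasiMeasurePreserving.ae_eq_comp h1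
  refine h0.trans (h2.trans ?_)
  filter_upwards with t
  simp only [Function.comp_apply]
  congr 1
  ring
lemma stft_term_symm (g : H2) (τ x ω : ℝ) :
    STFT g (Translate τ (Reflect g)) x ω
      = Complex.exp (-2 * Real.pi * Complex.I * ω * (τ + x)) *
        (starRingEnd ℂ) (STFT g (Translate τ (Reflect g)) x ω) := by
  set F : ℝ → ℂ := fun t =>
    g (τ - t) * (starRingEnd ℂ) (g (t - x)) * Complex.exp (-2 * Real.pi * Complex.I * ω * t)
    with hF
  have step1 : STFT g (Translate τ (Reflect g)) x ω = ∫ t : ℝ, F t := by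
    rw [STFT]
    apply integral_congr_ae
    filter_upwards [translate_reflect_coe g τ] with t ht
    rw [ht]
  have step3 : ∀ t : ℝ, F ((τ + x) - t)
      = Complex.exp (-2 * Real.pi * Complex.I * ω * (τ + x)) * (starRingEnd ℂ) (F t) := by
    intro t
    have harg1 : τ - ((τ + x) - t) = t - x := by ring
    have harg2 : ((τ + x) - t) - x = τ - t := by ring
    rw [hF]
    simp only [harg1, harg2]
    have hexp : (((-2 : ℂ)) * Real.pi * Complex.I * ω * (((τ + x) - t : ℝ) : ℂ))
        = (-2 * Real.pi * Complex.I * ω * (τ + x)) + -((-2 : ℂ) * Real.pi * Complex.I * ω * t) := by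
      push_cast
      ring
    rw [hexp, Complex.exp_add]
    have hconjexp : (starRingEnd ℂ) (Complex.exp (-2 * Real.pi * Complex.I * ω * t))
        = Complex.exp (-(-2 * Real.pi * Complex.I * ω * t)) := by
      rw [← Complex.exp_conj]
      congr 1
      simp only [map_mul, map_neg, Complex.conj_I, Complex.conj_ofReal, map_ofNat]
      ring
    simp only [map_mul, hconjexp, Complex.conj_conj]
    ring
  have step2 : (∫ t : ℝ, F t) = ∫ t : ℝ, F ((τ + x) - t) :=
    (integral_sub_left_eq_self F volume (τ + x)).symm
  rw [step1]
  conv_lhs => rw [step2]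
  calc (∫ t : ℝ, F ((τ + x) - t))
      = ∫ t : ℝ, Complex.exp (-2 * Real.pi * Complex.I * ω * (τ + x)) * (starRingEnd ℂ) (F t) := by
        congr 1
        funext t
        exact step3 t
    _ = Complex.exp (-2 * Real.pi * Complex.I * ω * (τ + x)) * ∫ t : ℝ, (starRingEnd ℂ) (F t) :=
        integral_const_mul _ _
    _ = Complex.exp (-2 * Real.pi * Complex.I * ω * (τ + x)) *
        (starRingEnd ℂ) (∫ t : ℝ, F t) := by rw [integral_conj]
/-- If `{T_{sk}(Rg) : k ∈ ℤ}` is a Bessel sequence and `c ∈ ℓ²(ℤ)`, then the series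
`f = ∑ₖ cₖ T_{sk}(Rg)` and `f_× = ∑ₖ conj(cₖ) T_{sk}(Rg)` converge unconditionally in
`L²(ℝ)` and the spectrograms of `f` and `f_×` agree pointwise on `ℝ × (1/s)ℤ`. -/
theorem stmt6 (g : Lp ℂ 2 (volume : Measure ℝ)) (s : ℝ) (hs : 0 < s)
    (hBessel : IsBessel fun k : ℤ => Translate (s * k) (Reflect g))
    (c : ℤ → ℂ) (hc : Summable fun k : ℤ => ‖c k‖ ^ 2) :
    ∃ f fₓ : Lp ℂ 2 (volume : Measure ℝ),
      HasSum (fun k : ℤ => c k • Translate (s * k) (Reflect g)) f ∧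
      HasSum (fun k : ℤ => (starRingEnd ℂ) (c k) • Translate (s * k) (Reflect g)) fₓ ∧
      ∀ x : ℝ, ∀ n : ℤ,
        ‖STFT g f x (n / s)‖ = ‖STFT g fₓ x (n / s)‖ := by
  set xf : ℤ → H2 := fun k : ℤ => Translate (s * k) (Reflect g) with hxf
  have hc' : Summable fun k : ℤ => ‖(starRingEnd ℂ) (c k)‖ ^ 2 := by
    simpa using hc
  have hsum1 : Summable fun k : ℤ => c k • xf k := bessel_synthesis xf hBessel c hc
  have hsum2 : Summable fun k : ℤ => (starRingEnd ℂ) (c k) • xf k :=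
    bessel_synthesis xf hBessel _ hc'
  refine ⟨∑' k, c k • xf k, ∑' k, (starRingEnd ℂ) (c k) • xf k,
    hsum1.hasSum, hsum2.hasSum, ?_⟩
  intro x n
  set ω : ℝ := n / s with hω
  set f := ∑' k, c k • xf k
  set fₓ := ∑' k, (starRingEnd ℂ) (c k) • xf k
  set K := stftKer g x ω with hK
  set L := innerSL ℂ K with hL
  set term : ℤ → ℂ := fun k => STFT g (xf k) x ω with hterm
  have hLf : ∀ h : H2, L h = STFT g h x ω := fun h => (stft_eq_inner g h x ω).symm
  have hA : HasSum (fun k => c k * term k) (STFT g f x ω) := by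
    have h := L.hasSum hsum1.hasSum
    simp only [ContinuousLinearMap.map_smul, smul_eq_mul] at h
    simpa only [hLf] using h
  have hB2 : HasSum (fun k => (starRingEnd ℂ) (c k) * term k) (STFT g fₓ x ω) := by
    have h := L.hasSum hsum2.hasSum
    simp only [ContinuousLinearMap.map_smul, smul_eq_mul] at h
    simpa only [hLf] using h
  -- phase identity for each term
  set E : ℂ := Complex.exp (2 * Real.pi * Complex.I * ω * x) with hE
  have hterm_conj : ∀ k : ℤ, (starRingEnd ℂ) (term k) = E * term k := by
    intro k
    have h1 := stft_term_symm g (s * k) x ω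
    have hexp_split : Complex.exp (-2 * Real.pi * Complex.I * ω * ((s * (k : ℝ)) + x))
        = Complex.exp (-2 * Real.pi * Complex.I * ω * (s * (k : ℝ))) *
          Complex.exp (-2 * Real.pi * Complex.I * ω * x) := by
      rw [← Complex.exp_add]
      congr 1
      push_cast
      ring
    have hred : ω * s = (n : ℝ) := by
      rw [hω]
      field_simp
    have hredC : (ω : ℂ) * (s : ℂ) = (n : ℂ) := by exact_mod_cast congrArg Complex.ofReal hred
    have hone : Complex.exp ((-2 : ℂ) * Real.pi * Complex.I * (ω : ℝ) * ((s : ℝ) * ((k : ℤ) : ℝ))) = 1 := by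
      have harg : ((-2 : ℂ)) * Real.pi * Complex.I * ((ω : ℝ) : ℂ) * (((s : ℝ) : ℂ) * (((k : ℤ) : ℝ) : ℂ)) =
          ((-(n * k) : ℤ) : ℂ) * (2 * Real.pi * Complex.I) := by
        push_cast
        linear_combination (-2 * (Real.pi : ℂ) * Complex.I * (k : ℂ)) * hredC
      rw [show ((-2 : ℂ) * Real.pi * Complex.I * (ω : ℝ) * ((s : ℝ) * ((k : ℤ) : ℝ))) =
          ((-2 : ℂ)) * Real.pi * Complex.I * ((ω : ℝ) : ℂ) * (((s : ℝ) : ℂ) * (((k : ℤ) : ℝ) : ℂ)) by push_cast; ring]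
      rw [harg]
      exact Complex.exp_int_mul_two_pi_mul_I _
    push_cast at h1 hexp_split hone
    rw [hexp_split, hone, one_mul] at h1
    -- h1 : term k = exp(-2πiωx) * conj (term k)
    have h2 := congrArg (starRingEnd ℂ) h1
    rw [map_mul, Complex.conj_conj] at h2
    have hconjexp : (starRingEnd ℂ) (Complex.exp (-2 * Real.pi * Complex.I * ω * x)) = E := by
      rw [hE, ← Complex.exp_conj]
      congr 1
      simp only [map_mul, map_neg, Complex.conj_I, Complex.conj_ofReal, map_ofNat]
      ring
    rw [hconjexp] at h2
    exact h2
  have hconjA : HasSum (fun k => (starRingEnd ℂ) (c k * term k))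
      ((starRingEnd ℂ) (STFT g f x ω)) :=
    hA.map (starRingEnd ℂ).toAddMonoidHom continuous_conj
  have hconjA' : HasSum (fun k => E * ((starRingEnd ℂ) (c k) * term k))
      ((starRingEnd ℂ) (STFT g f x ω)) := by
    have heq : (fun k => (starRingEnd ℂ) (c k * term k))
        = fun k => E * ((starRingEnd ℂ) (c k) * term k) := by
      funext k
      rw [map_mul, hterm_conj k]
      ring
    rwa [heq] at hconjA
  have hEB : HasSum (fun k => E * ((starRingEnd ℂ) (c k) * term k)) (E * STFT g fₓ x ω) :=
    hB2.mul_left E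
  have hkey : (starRingEnd ℂ) (STFT g f x ω) = E * STFT g fₓ x ω :=
    hconjA'.unique hEB
  have habsE : ‖E‖ = 1 := by
    rw [hE, Complex.norm_exp]
    have : (2 * Real.pi * Complex.I * ω * x).re = 0 := by
      simp [Complex.mul_re, Complex.mul_im]
    rw [this, Real.exp_zero]
  calc ‖STFT g f x ω‖ = ‖(starRingEnd ℂ) (STFT g f x ω)‖ :=
        (Complex.norm_conj _).symm
    _ = ‖E‖ * ‖STFT g fₓ x ω‖ := by rw [hkey, norm_mul]
    _ = ‖STFT g fₓ x ω‖ := by rw [habsE, one_mul]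
end
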